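/- Let C be an n×n symmetric Kalmanson matrix, let S ⊆ {1,…,n} be a set of fixed nodes with 1 ∈ S, and let p ≥ 0 be an integer such that the balanced 2-period TSP instance (C, S, p) admits at least one feasible solution. Then there exists a feasible solution of minimum total cost in which the first tour visits the nodes of its node set T₁ in increasing order of their indices and the second tour visits the nodes of its node set T₂ in decreasing order of their indices. -/

import Mathlib

/-- Length of a walk along a list of nodes (sum of consecutive edge costs). -/
def pathLen {α : Type*} (C : α → α → ℝ) : List α → ℝ
  | [] => 0
  | [_] => 0
  | a :: b :: t => C a b + pathLen C (b :: t)

/-- Length of the closed tour visiting the nodes of `l` in order and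
returning from the last node to the first one. -/
def tourLen {α : Type*} (C : α → α → ℝ) (l : List α) : ℝ :=
  pathLen C (l ++ l.take 1)

/-- Kalmanson conditions for a symmetric matrix indexed by `Fin n`. -/
def IsKalmanson {n : ℕ} (C : Fin n → Fin n → ℝ) : Prop :=
  ∀ i j k l : Fin n, i < j → j < k → k < l →
    C i j + C k l ≤ C i k + C j l ∧ C i l + C j k ≤ C i k + C j l

/-- A feasible solution of the balanced 2-period TSP: a pair of tours
(lists without repetition) whose node sets `T₁, T₂` satisfy
`T₁ ∪ T₂ = {1,…,n}`, `T₁ ∩ T₂ = S`, and `| |T₁| − |T₂| | ≤ p`. -/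
def Feasible2TSP {n : ℕ} (S : Finset (Fin n)) (p : ℕ) (l₁ l₂ : List (Fin n)) : Prop :=
  l₁.Nodup ∧ l₂.Nodup ∧
  l₁.toFinset ∪ l₂.toFinset = Finset.univ ∧
  l₁.toFinset ∩ l₂.toFinset = S ∧
  |(l₁.toFinset.card : ℤ) - (l₂.toFinset.card : ℤ)| ≤ (p : ℤ)

section helpers
variable {α : Type*} (C : α → α → ℝ)

lemma getLast_eq_of_eq {l l' : List α} (h : l = l') (h1 : l ≠ []) :
    l.getLast h1 = l'.getLast (h ▸ h1) := by subst h; rfl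

lemma pathLen_cons_cons (a b : α) (t : List α) :
    pathLen C (a :: b :: t) = C a b + pathLen C (b :: t) := rfl

lemma tourLen_cons_eq (a : α) (t : List α) :
    tourLen C (a :: t) = pathLen C ((a :: t) ++ [a]) := rfl

lemma pathLen_concat (x : α) : ∀ (a : α) (t : List α),
    pathLen C (a :: (t ++ [x])) = pathLen C (a :: t) + C ((a :: t).getLast (by simp)) x
  | a, [] => by simp [pathLen]
  | a, b :: r => by
    show C a b + pathLen C (b :: (r ++ [x])) = _
    rw [pathLen_concat x b r, pathLen_cons_cons, List.getLast_cons_cons]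
    ring

lemma tourLen_rot1 (x : α) (t : List α) :
    tourLen C (x :: t) = tourLen C (t ++ [x]) := by
  cases t with
  | nil => rfl
  | cons y r =>
    have hgl : (y :: (r ++ [x])).getLast (by simp) = x := by
      rw [getLast_eq_of_eq (show y :: (r ++ [x]) = (y :: r) ++ [x] by simp)]
      exact List.getLast_append_singleton _
    have hL : tourLen C (x :: y :: r)
        = C x y + (pathLen C (y :: r) + C ((y :: r).getLast (by simp)) x) := by
      show C x y + pathLen C (y :: (r ++ [x])) = _
      rw [pathLen_concat]
    have hR : tourLen C ((y :: r) ++ [x])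
        = (pathLen C (y :: r) + C ((y :: r).getLast (by simp)) x) + C x y := by
      show pathLen C (y :: ((r ++ [x]) ++ [y])) = _
      rw [pathLen_concat C y y (r ++ [x]), pathLen_concat C x y r, hgl]
    rw [hL, hR]; ring

lemma tourLen_comm : ∀ (xs ys : List α), tourLen C (xs ++ ys) = tourLen C (ys ++ xs)
  | [], ys => by simp
  | a :: xs, ys => by
    have h1 : tourLen C ((a :: xs) ++ ys) = tourLen C ((xs ++ ys) ++ [a]) := by
      rw [← tourLen_rot1]; rfl
    rw [h1, List.append_assoc, tourLen_comm xs (ys ++ [a]), List.append_assoc]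
    rfl

lemma pathLen_append_pair : ∀ (s : List α) (b a : α),
    pathLen C (s ++ [b, a]) = pathLen C (s ++ [b]) + C b a
  | [], b, a => by simp [pathLen]
  | [x], b, a => by simp [pathLen]
  | x :: y :: s, b, a => by
    show C x y + pathLen C (y :: s ++ [b, a]) = C x y + pathLen C (y :: s ++ [b]) + C b a
    rw [pathLen_append_pair (y :: s) b a]
    ring

lemma pathLen_reverse (hsym : ∀ i j, C i j = C j i) : ∀ (l : List α),
    pathLen C l.reverse = pathLen C l
  | [] => rfl
  | [a] => rfl
  | a :: b :: r => by
    have h1 : (a :: b :: r).reverse = r.reverse ++ [b, a] := by simp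
    rw [h1, pathLen_append_pair]
    have h2 : r.reverse ++ [b] = (b :: r).reverse := by simp
    rw [h2, pathLen_reverse hsym (b :: r), pathLen_cons_cons, hsym b a]
    ring

lemma tourLen_reverse (hsym : ∀ i j, C i j = C j i) (l : List α) :
    tourLen C l.reverse = tourLen C l := by
  cases l with
  | nil => rfl
  | cons a t =>
    rw [List.reverse_cons, tourLen_comm C t.reverse [a]]
    have h1 : ([a] ++ t.reverse) = (a :: t.reverse) := rfl
    rw [h1, tourLen_cons_eq]
    have h2 : (a :: t.reverse) ++ [a] = ((a :: t) ++ [a]).reverse := by simp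
    rw [h2, pathLen_reverse C hsym, tourLen_cons_eq]

lemma tourLen_cons_decomp (m a : α) (t : List α) :
    tourLen C (m :: a :: t) = tourLen C (a :: t)
      + (C m a + C ((a :: t).getLast (by simp)) m - C ((a :: t).getLast (by simp)) a) := by
  have hL : tourLen C (m :: a :: t)
      = C m a + (pathLen C (a :: t) + C ((a :: t).getLast (by simp)) m) := by
    show C m a + pathLen C (a :: (t ++ [m])) = _
    rw [pathLen_concat]
  have hR : tourLen C (a :: t)
      = pathLen C (a :: t) + C ((a :: t).getLast (by simp)) a := by
    show pathLen C (a :: (t ++ [a])) = _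
    rw [pathLen_concat]
  rw [hL, hR]; ring

lemma sorted_head_le [LinearOrder α] {l : List α} (hs : l.Pairwise (· ≤ ·)) (h : l ≠ [])
    {x : α} (hx : x ∈ l) : l.head h ≤ x := by
  cases l with
  | nil => exact absurd rfl h
  | cons a r =>
    rcases List.mem_cons.1 hx with rfl | hx
    · exact le_refl _
    · exact (List.pairwise_cons.1 hs).1 x hx

lemma sorted_le_getLast [LinearOrder α] : ∀ {l : List α}, l.Pairwise (· ≤ ·) → (h : l ≠ []) →
    ∀ {x : α}, x ∈ l → x ≤ l.getLast h
  | [], _, h, _, _ => absurd rfl h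
  | [a], _, _, x, hx => by simp_all
  | a :: b :: r, hs, _, x, hx => by
    rw [List.getLast_cons_cons]
    rcases List.mem_cons.1 hx with rfl | hx
    · exact le_trans ((List.pairwise_cons.1 hs).1 b (by simp))
        (sorted_le_getLast (List.pairwise_cons.1 hs).2 (by simp) (by simp))
    · exact sorted_le_getLast (List.pairwise_cons.1 hs).2 (by simp) hx
end helpers



lemma perm_toFinset_eq {α : Type*} [DecidableEq α] {l l' : List α} (h : List.Perm l l') :
    l.toFinset = l'.toFinset := Finset.ext fun x => by simp [h.mem_iff]

lemma insert_cost_lt {n : ℕ} (C : Fin n → Fin n → ℝ)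
    (hkal : IsKalmanson C) {u z a b m : Fin n} (hua : u ≤ a)
    (hbz : b ≤ z) (hzm : z < m) (hab : a < b) :
    C u m + C z m - C u z ≤ C a m + C b m - C a b := by
  rcases eq_or_lt_of_le hua with rfl | hua'
  · rcases eq_or_lt_of_le hbz with rfl | hbz'
    · exact le_refl _
    · have h := (hkal u b z m hab hbz' hzm).1
      linarith
  · rcases eq_or_lt_of_le hbz with rfl | hbz'
    · have h := (hkal u a b m hua' hab hzm).2
      linarith
    · have h1 := (hkal u a b m hua' hab (lt_trans hbz' hzm)).2
      have h2 := (hkal u b z m (lt_trans hua' hab) hbz' hzm).1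
      linarith

lemma insert_cost {n : ℕ} (C : Fin n → Fin n → ℝ) (hsym : ∀ i j, C i j = C j i)
    (hkal : IsKalmanson C) {u z a b m : Fin n} (hua : u ≤ a) (hub : u ≤ b)
    (haz : a ≤ z) (hbz : b ≤ z) (hzm : z < m) (hab : a ≠ b) :
    C u m + C z m - C u z ≤ C a m + C b m - C a b := by
  rcases hab.lt_or_gt with h | h
  · exact insert_cost_lt C hkal hua hbz hzm h
  · have h1 := insert_cost_lt C hkal hub haz hzm h
    have h2 := hsym a b
    linarith

lemma sorted_tour_optimal {n : ℕ} (C : Fin n → Fin n → ℝ) (hsym : ∀ i j, C i j = C j i)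
    (hkal : IsKalmanson C) (l : List (Fin n)) (hnd : l.Nodup) :
    tourLen C (l.toFinset.sort (· ≤ ·)) ≤ tourLen C l := by
  suffices h : ∀ (k : ℕ) (l : List (Fin n)), l.length = k → l.Nodup →
      tourLen C (l.toFinset.sort (· ≤ ·)) ≤ tourLen C l from h l.length l rfl hnd
  intro k
  induction k using Nat.strong_induction_on with
  | _ k ih =>
  intro l hlen hnd
  cases l with
  | nil => simp [tourLen, pathLen]
  | cons x l0 =>
  have hTne : (x :: l0).toFinset.Nonempty := ⟨x, by simp⟩
  set T := (x :: l0).toFinset with hTdef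
  set m := T.max' hTne with hmdef
  have hmem : m ∈ (x :: l0) := by
    rw [← List.mem_toFinset]; exact T.max'_mem hTne
  obtain ⟨s1, s2, hsplit⟩ := List.append_of_mem hmem
  have hp1 : List.Perm (x :: l0) (m :: (s1 ++ s2)) := by
    rw [hsplit]; exact List.perm_middle
  have hperm : List.Perm (x :: l0) (m :: (s2 ++ s1)) :=
    hp1.trans ((List.perm_append_comm).cons m)
  have hTL : tourLen C (x :: l0) = tourLen C (m :: (s2 ++ s1)) := by
    rw [hsplit]
    have := tourLen_comm C s1 (m :: s2)
    rw [this]; rfl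
  have hnd' : (m :: (s2 ++ s1)).Nodup := hperm.nodup hnd
  have hmt : m ∉ (s2 ++ s1) := (List.nodup_cons.1 hnd').1
  have hndt : (s2 ++ s1).Nodup := (List.nodup_cons.1 hnd').2
  have hTfin : T = insert m (s2 ++ s1).toFinset := by
    rw [hTdef, perm_toFinset_eq hperm, List.toFinset_cons]
  have hlt : ∀ y ∈ (s2 ++ s1).toFinset, y < m := by
    intro y hy
    have hyT : y ∈ T := by rw [hTfin]; exact Finset.mem_insert_of_mem hy
    have hne : y ≠ m := fun h => hmt (h ▸ (List.mem_toFinset.1 hy))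
    exact lt_of_le_of_ne (T.le_max' y hyT) hne
  have hlen2 : ∀ (t' : List (Fin n)), (s2 ++ s1) = t' → t'.length < k := by
    intro t' h
    have h1 := hperm.length_eq
    rw [h, hlen] at h1
    simp at h1
    omega
  -- case analysis on s2 ++ s1
  rcases ht : (s2 ++ s1) with _ | ⟨a, t1⟩
  · -- tour is a singleton [m]
    have : (x :: l0) = [m] := List.perm_singleton.1 (ht ▸ hperm)
    rw [hTdef, this]
    simp [List.toFinset_cons, Finset.sort_singleton]
  rcases ht1 : t1 with _ | ⟨b, t0⟩
  · -- two-element tour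
    rw [ht1] at ht
    have ham : a < m := hlt a (by rw [ht]; simp)
    have hsortT : T.sort (· ≤ ·) = [a, m] := by
      have hnd2 : ([a, m] : List (Fin n)).Nodup := by simp [ham.ne]
      have hfin : ([a, m] : List (Fin n)).toFinset = T := by
        rw [hTfin, ht]
        ext y; simp [or_comm]
      rw [← hfin]
      exact (List.toFinset_sort _ hnd2).2 (by simp [ham.le])
    rw [hTL, ht, hsortT]
    simp [tourLen, pathLen]
    ring_nf
    rw [hsym a m]
  · -- main case: at least three nodes
    rw [ht1] at ht
    set t : List (Fin n) := a :: b :: t0 with htdef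
    set T' := t.toFinset with hT'def
    have hT'ne : T'.Nonempty := ⟨a, by simp [hT'def, htdef]⟩
    set s' := T'.sort (· ≤ ·) with hs'def
    have hs'ne : s' ≠ [] := by
      intro h
      have : a ∈ s' := (Finset.mem_sort _).2 (by simp [hT'def, htdef])
      rw [h] at this; simp at this
    obtain ⟨c, s0, hcs⟩ := List.exists_cons_of_ne_nil hs'ne
    have hs'sorted : s'.Pairwise (· ≤ ·) := Finset.pairwise_sort _ _
    have hs'nodup : s'.Nodup := Finset.sort_nodup _ _
    have hltT' : ∀ y ∈ T', y < m := fun y hy => hlt y (by rw [ht]; exact hy)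
    -- identify the sorted list of T
    have hsortT : T.sort (· ≤ ·) = s' ++ [m] := by
      have hnd2 : (s' ++ [m]).Nodup := by
        rw [List.nodup_append]
        refine ⟨hs'nodup, by simp, ?_⟩
        intro y hy z hz
        rw [List.mem_singleton] at hz
        rw [hz]
        exact (hltT' y ((Finset.mem_sort (r := (· ≤ ·))).1 hy)).ne
      have hsorted2 : (s' ++ [m]).Pairwise (· ≤ ·) := by
        rw [List.pairwise_append]
        refine ⟨hs'sorted, by simp, ?_⟩
        intro y hy z hz
        rw [List.mem_singleton] at hz
        subst hz
        exact (hltT' y ((Finset.mem_sort (r := (· ≤ ·))).1 hy)).le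
      have hfin : (s' ++ [m]).toFinset = T := by
        rw [List.toFinset_append, hTfin, ht]
        simp [hs'def, hT'def, Finset.sort_toFinset]
      rw [← hfin]
      exact (List.toFinset_sort _ hnd2).2 hsorted2
    -- decompositions
    have hrot : tourLen C (s' ++ [m]) = tourLen C (m :: s') := by
      rw [tourLen_comm C s' [m]]; rfl
    have hdR : tourLen C (m :: s') = tourLen C s'
        + (C m c + C ((c :: s0).getLast (by simp)) m - C ((c :: s0).getLast (by simp)) c) := by
      rw [hcs]
      exact tourLen_cons_decomp C m c s0
    have hdL : tourLen C (m :: t) = tourLen C t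
        + (C m a + C (t.getLast (by simp [htdef])) m - C (t.getLast (by simp [htdef])) a) := by
      exact tourLen_cons_decomp C m a (b :: t0)
    -- induction hypothesis
    have hIH : tourLen C s' ≤ tourLen C t := by
      have := ih t.length (hlen2 t ht) t rfl (ht ▸ hndt)
      rwa [← hT'def, ← hs'def] at this
    -- compare insertion costs
    set gS := (c :: s0).getLast (by simp) with hgSdef
    set gT := t.getLast (by simp [htdef]) with hgTdef
    have hcmem : c ∈ T' := by
      have hc : c ∈ s' := by rw [hcs]; simp
      exact (Finset.mem_sort (r := (· ≤ ·))).1 hc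
    have hgSmem : gS ∈ T' := by
      have hc : gS ∈ s' := by rw [hcs]; exact List.getLast_mem _
      exact (Finset.mem_sort (r := (· ≤ ·))).1 hc
    have hamem : a ∈ T' := by simp [hT'def, htdef]
    have hgTmem : gT ∈ T' := by
      rw [hT'def]; exact List.mem_toFinset.2 (List.getLast_mem _)
    have hhead : ∀ y ∈ T', c ≤ y := by
      intro y hy
      have : y ∈ (c :: s0) := by rw [← hcs]; exact (Finset.mem_sort (r := (· ≤ ·))).2 hy
      exact sorted_head_le (hcs ▸ hs'sorted) (by simp) this
    have hlast : ∀ y ∈ T', y ≤ gS := by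
      intro y hy
      have : y ∈ (c :: s0) := by rw [← hcs]; exact (Finset.mem_sort (r := (· ≤ ·))).2 hy
      exact sorted_le_getLast (hcs ▸ hs'sorted) (by simp) this
    have hndab : (a :: b :: t0).Nodup := by rw [ht] at hndt; exact hndt
    have hane : a ≠ gT := by
      have hgl : gT = (b :: t0).getLast (by simp) := List.getLast_cons_cons
      have h1 : gT ∈ (b :: t0) := by rw [hgl]; exact List.getLast_mem _
      have h2 : a ∉ (b :: t0) := (List.nodup_cons.1 hndab).1
      exact fun h => h2 (h ▸ h1)
    have hins : C c m + C gS m - C c gS ≤ C a m + C gT m - C a gT :=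
      insert_cost C hsym hkal (hhead a hamem) (hhead gT hgTmem)
        (hlast a hamem) (hlast gT hgTmem) (hltT' gS hgSmem) hane
    -- put everything together
    have hgoal : tourLen C (T.sort (· ≤ ·)) ≤ tourLen C (x :: l0) := by
      rw [hsortT, hrot, hdR, hTL, ht, hdL]
      have e1 := hsym m c
      have e2 := hsym m a
      have e3 := hsym gS c
      have e4 := hsym gT a
      linarith
    exact hgoal


theorem balanced_two_period_TSP_has_sorted_optimal_solution
    {n : ℕ} (hn : 0 < n) (C : Fin n → Fin n → ℝ)
    (hsym : ∀ i j, C i j = C j i) (hkal : IsKalmanson C)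
    (S : Finset (Fin n)) (h1S : (⟨0, hn⟩ : Fin n) ∈ S) (p : ℕ)
    (hfeas : ∃ l₁ l₂ : List (Fin n), Feasible2TSP S p l₁ l₂) :
    ∃ l₁ l₂ : List (Fin n), Feasible2TSP S p l₁ l₂ ∧
      l₁ = l₁.toFinset.sort (· ≤ ·) ∧
      l₂ = (l₂.toFinset.sort (· ≤ ·)).reverse ∧
      ∀ m₁ m₂ : List (Fin n), Feasible2TSP S p m₁ m₂ →
        tourLen C l₁ + tourLen C l₂ ≤ tourLen C m₁ + tourLen C m₂ := by
  obtain ⟨a₁, a₂, hfa⟩ := hfeas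
  set A : Set (List (Fin n) × List (Fin n)) := {q | Feasible2TSP S p q.1 q.2} with hA
  have hfin : A.Finite := by
    apply Set.Finite.subset
      ((List.finite_length_le (Fin n) n).prod (List.finite_length_le (Fin n) n))
    rintro ⟨q1, q2⟩ hq
    refine ⟨le_trans hq.1.length_le_card (by simp), le_trans hq.2.1.length_le_card (by simp)⟩
  have hne : A.Nonempty := ⟨(a₁, a₂), hfa⟩
  obtain ⟨⟨m₁, m₂⟩, hmA, hmin⟩ :=
    Set.exists_min_image A (fun q => tourLen C q.1 + tourLen C q.2) hfin hne
  obtain ⟨h1, h2, h3, h4, h5⟩ := hmA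
  set T₁ := m₁.toFinset with hT₁
  set T₂ := m₂.toFinset with hT₂
  refine ⟨T₁.sort (· ≤ ·), (T₂.sort (· ≤ ·)).reverse, ?_, ?_, ?_, ?_⟩
  · refine ⟨Finset.sort_nodup _ _, List.nodup_reverse.2 (Finset.sort_nodup _ _), ?_, ?_, ?_⟩
    · rw [List.toFinset_reverse, Finset.sort_toFinset, Finset.sort_toFinset]; exact h3
    · rw [List.toFinset_reverse, Finset.sort_toFinset, Finset.sort_toFinset]; exact h4
    · rw [List.toFinset_reverse, Finset.sort_toFinset, Finset.sort_toFinset]; exact h5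
  · rw [Finset.sort_toFinset]
  · rw [List.toFinset_reverse, Finset.sort_toFinset]
  · intro n₁ n₂ hf
    have hmono := hmin (n₁, n₂) hf
    have ho1 : tourLen C (T₁.sort (· ≤ ·)) ≤ tourLen C m₁ := sorted_tour_optimal C hsym hkal m₁ h1
    have ho2 : tourLen C (T₂.sort (· ≤ ·)) ≤ tourLen C m₂ := sorted_tour_optimal C hsym hkal m₂ h2
    have hr : tourLen C ((T₂.sort (· ≤ ·)).reverse) = tourLen C (T₂.sort (· ≤ ·)) :=
      tourLen_reverse C hsym _
    simp only at hmono
    rw [hr]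
    linarith
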